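/- Let I ⊆ k[x_1,…,x_n] be an ideal, v ∈ ℝ^n, and f ∈ in_v(I). Then f can be written as f = Σ_{i=1}^{s} in_v(c_i) where c_1,…,c_s ∈ I and the summands in_v(c_1),…,in_v(c_s) have pairwise distinct v-degrees. -/

import Mathlib

open MvPolynomial

/-- A term order on the monomials of `k[x_1,…,x_n]`, identified with exponent
vectors in `ℕ^n`: a strict total order with `1` smallest and compatible with
multiplication of monomials. -/
structure TermOrder (n : ℕ) : Type where
  lt : (Fin n →₀ ℕ) → (Fin n →₀ ℕ) → Prop
  irrefl : ∀ a, ¬ lt a a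
  trans : ∀ a b c, lt a b → lt b c → lt a c
  total : ∀ a b, a ≠ b → lt a b ∨ lt b a
  zero_lt : ∀ a, a ≠ 0 → lt 0 a
  add_right : ∀ a b c, lt a b → lt (a + c) (b + c)

variable {n : ℕ} {k : Type*} [Field k]

/-- The exponent of the `τ`-largest term of `f` (and `0` if `f = 0`). -/
noncomputable def TermOrder.leadExp (τ : TermOrder n) (f : MvPolynomial (Fin n) k) :
    Fin n →₀ ℕ :=
  letI := Classical.propDecidable (∃ α, α ∈ f.support ∧ ∀ β ∈ f.support, β ≠ α → τ.lt β α)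
  if h : ∃ α, α ∈ f.support ∧ ∀ β ∈ f.support, β ≠ α → τ.lt β α then h.choose else 0

/-- The initial term `in_τ(f)` : the `τ`-largest term of `f` (with coefficient). -/
noncomputable def TermOrder.initialTerm (τ : TermOrder n) (f : MvPolynomial (Fin n) k) :
    MvPolynomial (Fin n) k :=
  monomial (τ.leadExp f) (f.coeff (τ.leadExp f))

/-- The initial ideal `in_τ(I) = ⟨in_τ(f) : f ∈ I \ {0}⟩`. -/
noncomputable def TermOrder.initialIdeal (τ : TermOrder n) (I : Ideal (MvPolynomial (Fin n) k)) :
    Ideal (MvPolynomial (Fin n) k) :=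
  Ideal.span {p | ∃ f ∈ I, f ≠ 0 ∧ p = τ.initialTerm f}

/-- The `ω`-degree `⟨ω,α⟩` of a monomial exponent `α`. -/
noncomputable def wdeg (ω : Fin n → ℝ) (α : Fin n →₀ ℕ) : ℝ := ∑ i, ω i * (α i : ℝ)

/-- The initial form `in_ω(f)`: the sum of the terms of `f` whose exponents
maximize `⟨ω,·⟩`. -/
noncomputable def initialForm (ω : Fin n → ℝ) (f : MvPolynomial (Fin n) k) :
    MvPolynomial (Fin n) k :=
  letI : DecidablePred fun α : Fin n →₀ ℕ => ∀ β ∈ f.support, wdeg ω β ≤ wdeg ω α :=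
    Classical.decPred _
  ∑ α ∈ f.support.filter (fun α => ∀ β ∈ f.support, wdeg ω β ≤ wdeg ω α),
    monomial α (f.coeff α)

/-- The initial ideal `in_ω(I) = ⟨in_ω(f) : f ∈ I⟩`. -/
noncomputable def initialFormIdeal (ω : Fin n → ℝ) (I : Ideal (MvPolynomial (Fin n) k)) :
    Ideal (MvPolynomial (Fin n) k) :=
  Ideal.span {p | ∃ f ∈ I, p = initialForm ω f}

/-- `C_≺(I)`: the closure of `{u : in_u(I) = in_≺(I)}` in `ℝ^n`. -/
noncomputable def Cprec (τ : TermOrder n) (I : Ideal (MvPolynomial (Fin n) k)) :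
    Set (Fin n → ℝ) :=
  closure {u : Fin n → ℝ | initialFormIdeal u I = τ.initialIdeal I}

/-- `C_v(I)`: the closure of the equivalence class `{u : in_u(I) = in_v(I)}`. -/
noncomputable def Cv (I : Ideal (MvPolynomial (Fin n) k)) (v : Fin n → ℝ) :
    Set (Fin n → ℝ) :=
  closure {u : Fin n → ℝ | initialFormIdeal u I = initialFormIdeal v I}

/-- `F` is a face of `C`: either empty or the set of maximizers over `C` of a
linear functional. -/
def IsFaceOf (C F : Set (Fin n → ℝ)) : Prop :=
  F = ∅ ∨ ∃ w : Fin n → ℝ, F = {x ∈ C | ∀ y ∈ C, ∑ i, w i * y i ≤ ∑ i, w i * x i}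

/-- The Gröbner fan of `I`: all nonempty faces of the cones `C_v(I)`, `v ∈ ℝ^n_{>0}`. -/
noncomputable def GroebnerFan (I : Ideal (MvPolynomial (Fin n) k)) :
    Set (Set (Fin n → ℝ)) :=
  {F | F.Nonempty ∧ ∃ v : Fin n → ℝ, (∀ i, 0 < v i) ∧ IsFaceOf (Cv I v) F}

/-- `G` is a (finite) Gröbner basis of `I` w.r.t. `τ`. -/
def IsGroebnerBasis (τ : TermOrder n) (I : Ideal (MvPolynomial (Fin n) k))
    (G : Set (MvPolynomial (Fin n) k)) : Prop :=
  G.Finite ∧ Ideal.span G = I ∧ τ.initialIdeal I = Ideal.span (τ.initialTerm '' G)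

/-- `G` is the reduced Gröbner basis of `I` w.r.t. `τ`. -/
def IsReducedGroebnerBasis (τ : TermOrder n) (I : Ideal (MvPolynomial (Fin n) k))
    (G : Set (MvPolynomial (Fin n) k)) : Prop :=
  IsGroebnerBasis τ I G ∧
  (∀ g ∈ G, g.coeff (τ.leadExp g) = 1) ∧
  (∀ g ∈ G, ∀ α ∈ g.support, α ≠ τ.leadExp g →
    (monomial α 1 : MvPolynomial (Fin n) k) ∉ τ.initialIdeal I) ∧
  (∀ g ∈ G, Ideal.span (τ.initialTerm '' (G \ {g})) ≠ τ.initialIdeal I)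
section Aux
open Finset

variable (v : Fin n → ℝ)

lemma wdeg_add (α β : Fin n →₀ ℕ) : wdeg v (α + β) = wdeg v α + wdeg v β := by
  simp [wdeg, Finsupp.add_apply, mul_add, Finset.sum_add_distrib]

lemma coeff_initialForm (f : MvPolynomial (Fin n) k) (β : Fin n →₀ ℕ) :
    coeff β (initialForm v f) =
      if ∀ γ ∈ f.support, wdeg v γ ≤ wdeg v β then f.coeff β else 0 := by
  classical
  rw [initialForm, Finset.filter_congr_decidable, MvPolynomial.coeff_sum]
  simp only [coeff_monomial]
  rw [Finset.sum_ite_eq' (f.support.filter _) β (fun x => f.coeff x)]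
  by_cases hc : ∀ γ ∈ f.support, wdeg v γ ≤ wdeg v β
  · rw [if_pos hc]
    by_cases hm : β ∈ f.support
    · rw [if_pos (Finset.mem_filter.2 ⟨hm, hc⟩)]
    · rw [if_neg (fun h => hm (Finset.mem_filter.1 h).1),
        MvPolynomial.notMem_support_iff.1 hm]
  · rw [if_neg hc, if_neg (fun h => hc (Finset.mem_filter.1 h).2)]

lemma initialForm_zero : initialForm v (0 : MvPolynomial (Fin n) k) = 0 := by
  classical
  ext β
  simp [coeff_initialForm]

/-- The maximal `v`-degree of a term of `f` (junk value `0` if `f = 0`). -/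
noncomputable def mdeg (f : MvPolynomial (Fin n) k) : ℝ :=
  WithBot.unbotD 0 ((f.support.image (wdeg v)).max)

lemma wdeg_le_mdeg {f : MvPolynomial (Fin n) k} {α : Fin n →₀ ℕ}
    (h : α ∈ f.support) : wdeg v α ≤ mdeg v f := by
  classical
  have h1 : wdeg v α ∈ f.support.image (wdeg v) := Finset.mem_image_of_mem _ h
  have h2 := Finset.le_max h1
  obtain ⟨b, hb⟩ := Finset.max_of_mem h1
  rw [mdeg, hb]
  rw [hb] at h2
  exact_mod_cast h2

lemma exists_mdeg {f : MvPolynomial (Fin n) k} (hf : f ≠ 0) :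
    ∃ α ∈ f.support, wdeg v α = mdeg v f := by
  classical
  have hne : (f.support.image (wdeg v)).Nonempty :=
    (MvPolynomial.support_nonempty.2 hf).image _
  obtain ⟨b, hb⟩ := Finset.max_of_nonempty hne
  obtain ⟨α, hα, hαb⟩ := Finset.mem_image.1 (Finset.mem_of_max hb)
  refine ⟨α, hα, ?_⟩
  rw [mdeg, hb, hαb]
  rfl

lemma cond_iff {f : MvPolynomial (Fin n) k} (hf : f ≠ 0) (β : Fin n →₀ ℕ) :
    (∀ γ ∈ f.support, wdeg v γ ≤ wdeg v β) ↔ mdeg v f ≤ wdeg v β := by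
  constructor
  · intro h
    obtain ⟨α, hα, hd⟩ := exists_mdeg v hf
    exact hd ▸ h α hα
  · intro h γ hγ
    exact (wdeg_le_mdeg v hγ).trans h

lemma initialForm_ne_zero {f : MvPolynomial (Fin n) k} (hf : f ≠ 0) :
    initialForm v f ≠ 0 := by
  obtain ⟨α, hα, hd⟩ := exists_mdeg v hf
  intro h0
  have := coeff_initialForm v f α
  rw [h0, if_pos ((cond_iff v hf α).2 (le_of_eq hd.symm))] at this
  exact (MvPolynomial.mem_support_iff.1 hα) this.symm

lemma support_initialForm {f : MvPolynomial (Fin n) k} (hf : f ≠ 0)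
    {α : Fin n →₀ ℕ} (h : α ∈ (initialForm v f).support) : wdeg v α = mdeg v f := by
  classical
  rw [MvPolynomial.mem_support_iff, coeff_initialForm] at h
  by_cases hc : ∀ γ ∈ f.support, wdeg v γ ≤ wdeg v α
  · rw [if_pos hc] at h
    exact le_antisymm (wdeg_le_mdeg v (MvPolynomial.mem_support_iff.2 h))
      ((cond_iff v hf α).1 hc)
  · rw [if_neg hc] at h
    exact absurd rfl h

lemma support_sub_initialForm {f : MvPolynomial (Fin n) k} (hf : f ≠ 0)
    {α : Fin n →₀ ℕ} (h : α ∈ (f - initialForm v f).support) :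
    wdeg v α < mdeg v f := by
  classical
  rw [MvPolynomial.mem_support_iff, MvPolynomial.coeff_sub, coeff_initialForm] at h
  by_cases hc : ∀ γ ∈ f.support, wdeg v γ ≤ wdeg v α
  · rw [if_pos hc, sub_self] at h
    exact absurd rfl h
  · rw [not_iff_not.2 (cond_iff v hf α), not_le] at hc
    exact hc

/-- Characterization: if `f = g + r` with `g ≠ 0` `v`-homogeneous of degree `d`
and all terms of `r` of degree `< d`, then `in_v f = g`. -/
lemma initialForm_add_of {g r : MvPolynomial (Fin n) k} {d : ℝ} (hg : g ≠ 0)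
    (hgd : ∀ α ∈ g.support, wdeg v α = d) (hrd : ∀ α ∈ r.support, wdeg v α < d) :
    initialForm v (g + r) = g := by
  classical
  have hle : ∀ α ∈ (g + r).support, wdeg v α ≤ d := by
    intro α hα
    rcases Finset.mem_union.1 (MvPolynomial.support_add hα) with h | h
    · exact le_of_eq (hgd α h)
    · exact le_of_lt (hrd α h)
  have hcoeff : ∀ β, wdeg v β = d → coeff β (g + r) = coeff β g := by
    intro β hβ
    have : coeff β r = 0 := by
      by_contra hr0
      exact absurd hβ (ne_of_lt (hrd β (MvPolynomial.mem_support_iff.2 hr0)))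
    simp [MvPolynomial.coeff_add, this]
  ext β
  rw [coeff_initialForm]
  by_cases hβ : wdeg v β = d
  · rw [if_pos fun γ hγ => (hle γ hγ).trans (le_of_eq hβ.symm)]
    exact hcoeff β hβ
  · have hg0 : coeff β g = 0 := by
      rw [← MvPolynomial.notMem_support_iff]
      intro hmem
      exact hβ (hgd β hmem)
    rw [hg0]
    by_cases hc : ∀ γ ∈ (g + r).support, wdeg v γ ≤ wdeg v β
    · rw [if_pos hc, ← MvPolynomial.notMem_support_iff]
      intro hβf
      obtain ⟨α0, hα0⟩ := MvPolynomial.support_nonempty.2 hg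
      have hα0f : α0 ∈ (g + r).support := by
        rw [MvPolynomial.mem_support_iff, hcoeff α0 (hgd α0 hα0)]
        exact MvPolynomial.mem_support_iff.1 hα0
      exact hβ (le_antisymm (hle β hβf) ((hgd α0 hα0) ▸ hc α0 hα0f))
    · rw [if_neg hc]

end Aux
section Aux2
open Finset

variable (v : Fin n → ℝ)

lemma mem_support_monomial_mul {α : Fin n →₀ ℕ} {a : k} {p : MvPolynomial (Fin n) k}
    {β : Fin n →₀ ℕ} (h : β ∈ (monomial α a * p).support) :
    ∃ γ ∈ p.support, β = α + γ := by
  rw [MvPolynomial.mem_support_iff, MvPolynomial.coeff_monomial_mul'] at h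
  by_cases hle : α ≤ β
  · rw [if_pos hle] at h
    refine ⟨β - α, ?_, (add_tsub_cancel_of_le hle).symm⟩
    rw [MvPolynomial.mem_support_iff]
    intro h0
    rw [h0, mul_zero] at h
    exact h rfl
  · rw [if_neg hle] at h
    exact absurd rfl h

lemma initialForm_monomial_mul (α : Fin n →₀ ℕ) (a : k) (g : MvPolynomial (Fin n) k) :
    initialForm v (monomial α a * g) = monomial α a * initialForm v g := by
  classical
  by_cases ha : a = 0
  · simp [ha, initialForm_zero]
  by_cases hg : g = 0
  · simp [hg, initialForm_zero]
  have hin : monomial α a * initialForm v g ≠ 0 :=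
    mul_ne_zero (by simpa [MvPolynomial.monomial_eq_zero] using ha)
      (initialForm_ne_zero v hg)
  have key : monomial α a * g =
      monomial α a * initialForm v g + monomial α a * (g - initialForm v g) := by ring
  rw [key]
  refine initialForm_add_of (d := wdeg v α + mdeg v g) v hin ?_ ?_
  · intro β hβ
    obtain ⟨γ, hγ, rfl⟩ := mem_support_monomial_mul hβ
    rw [wdeg_add, support_initialForm v hg hγ]
  · intro β hβ
    obtain ⟨γ, hγ, rfl⟩ := mem_support_monomial_mul hβ
    rw [wdeg_add]
    exact add_lt_add_right (support_sub_initialForm v hg hγ) _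

lemma mem_support_sum {ι : Type*} {s : Finset ι} {F : ι → MvPolynomial (Fin n) k}
    {β : Fin n →₀ ℕ} (h : β ∈ (∑ j ∈ s, F j).support) : ∃ j ∈ s, β ∈ (F j).support := by
  by_contra hc
  push_neg at hc
  rw [MvPolynomial.mem_support_iff, MvPolynomial.coeff_sum] at h
  exact h (Finset.sum_eq_zero fun j hj =>
    MvPolynomial.notMem_support_iff.1 (hc j hj))

lemma sum_initialForm_decomposition {ι : Type*} (I : Ideal (MvPolynomial (Fin n) k))
    (T : Finset ι) (c0 : ι → MvPolynomial (Fin n) k) (hc0 : ∀ j ∈ T, c0 j ∈ I) :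
    ∃ (s : ℕ) (c : Fin s → MvPolynomial (Fin n) k),
      (∀ i, c i ∈ I) ∧
      (∑ j ∈ T, initialForm v (c0 j)) = ∑ i, initialForm v (c i) ∧
      ∀ i j, i ≠ j →
        ∀ α ∈ (initialForm v (c i)).support, ∀ β ∈ (initialForm v (c j)).support,
          wdeg v α ≠ wdeg v β := by
  classical
  set T' := T.filter (fun j => c0 j ≠ 0) with hT'
  have hsum1 : ∑ j ∈ T, initialForm v (c0 j) = ∑ j ∈ T', initialForm v (c0 j) := by
    refine (Finset.sum_filter_of_ne ?_).symm
    intro j _ hne h0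
    rw [h0, initialForm_zero] at hne
    exact hne rfl
  set dg : ι → ℝ := fun j => mdeg v (c0 j) with hdg
  set D := T'.image dg with hDdef
  set H : ℝ → MvPolynomial (Fin n) k :=
    fun d => ∑ j ∈ T'.filter (fun j => dg j = d), initialForm v (c0 j) with hH
  set b : ℝ → MvPolynomial (Fin n) k :=
    fun d => ∑ j ∈ T'.filter (fun j => dg j = d), c0 j with hb
  have hsum2 : ∑ j ∈ T', initialForm v (c0 j) = ∑ d ∈ D, H d :=
    (Finset.sum_fiberwise_of_maps_to (fun j hj => Finset.mem_image_of_mem dg hj) _).symm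
  have hmemT' : ∀ {d : ℝ} {j : ι}, j ∈ T'.filter (fun j => dg j = d) →
      j ∈ T ∧ c0 j ≠ 0 ∧ dg j = d := by
    intro d j hj
    have h1 := Finset.mem_filter.1 hj
    have h2 := Finset.mem_filter.1 h1.1
    exact ⟨h2.1, h2.2, h1.2⟩
  have hHd : ∀ d, ∀ α ∈ (H d).support, wdeg v α = d := by
    intro d α hα
    obtain ⟨j, hj, hαj⟩ := mem_support_sum hα
    obtain ⟨-, hj0, hjd⟩ := hmemT' hj
    rw [support_initialForm v hj0 hαj]
    exact hjd
  have hbI : ∀ d, b d ∈ I :=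
    fun d => Ideal.sum_mem _ (fun j hj => hc0 j (hmemT' hj).1)
  have hbH : ∀ d, H d ≠ 0 → initialForm v (b d) = H d := by
    intro d hne
    have hkey : b d = H d + (b d - H d) := by ring
    rw [hkey]
    refine initialForm_add_of (d := d) v hne (hHd d) ?_
    intro α hα
    have hsub : b d - H d =
        ∑ j ∈ T'.filter (fun j => dg j = d), (c0 j - initialForm v (c0 j)) := by
      rw [hb, hH, Finset.sum_sub_distrib]
    rw [hsub] at hα
    obtain ⟨j, hj, hαj⟩ := mem_support_sum hα
    obtain ⟨-, hj0, hjd⟩ := hmemT' hj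
    rw [← hjd]
    exact support_sub_initialForm v hj0 hαj
  set D' := D.filter (fun d => H d ≠ 0) with hD'
  have hsum3 : ∑ d ∈ D, H d = ∑ d ∈ D', H d :=
    (Finset.sum_filter_of_ne (fun d _ hd => hd)).symm
  have hD'ne : ∀ d ∈ D', H d ≠ 0 := fun d hd => (Finset.mem_filter.1 hd).2
  set e := D'.equivFin with he
  refine ⟨D'.card, fun i => b ((e.symm i : ℝ)), fun i => hbI _, ?_, ?_⟩
  · rw [hsum1, hsum2, hsum3, ← Finset.sum_coe_sort D' H]
    refine Fintype.sum_equiv e _ _ ?_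
    intro x
    show H ↑x = initialForm v (b ((e.symm (e x) : ℝ)))
    rw [Equiv.symm_apply_apply]
    exact (hbH _ (hD'ne _ x.2)).symm
  · intro i j hij α hα β hβ
    rw [hbH _ (hD'ne _ (e.symm i).2)] at hα
    rw [hbH _ (hD'ne _ (e.symm j).2)] at hβ
    rw [hHd _ α hα, hHd _ β hβ]
    intro hcontra
    exact hij (e.symm.injective (Subtype.ext hcontra))

end Aux2
/-- Every `f ∈ in_v(I)` can be written as `f = Σᵢ in_v(cᵢ)` with `cᵢ ∈ I` and
the summands `in_v(cᵢ)` of pairwise distinct `v`-degrees. -/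
theorem mem_initialFormIdeal_decomposition (I : Ideal (MvPolynomial (Fin n) k))
    (v : Fin n → ℝ) (f : MvPolynomial (Fin n) k) (hf : f ∈ initialFormIdeal v I) :
    ∃ (s : ℕ) (c : Fin s → MvPolynomial (Fin n) k),
      (∀ i, c i ∈ I) ∧
      f = ∑ i, initialForm v (c i) ∧
      ∀ i j, i ≠ j →
        ∀ α ∈ (initialForm v (c i)).support, ∀ β ∈ (initialForm v (c j)).support,
          wdeg v α ≠ wdeg v β := by
  classical
  rw [initialFormIdeal, Ideal.span] at hf
  obtain ⟨m, h, g, hsum⟩ := Submodule.mem_span_set'.1 hf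
  choose p hpI hpg using fun i => (g i).2
  have hf2 : f = ∑ j ∈ Finset.univ.sigma (fun i : Fin m => (h i).support),
      initialForm v (monomial j.2 ((h j.1).coeff j.2) * p j.1) := by
    rw [← hsum, Finset.sum_sigma]
    refine Finset.sum_congr rfl fun i _ => ?_
    rw [smul_eq_mul, hpg i]
    conv_lhs => rw [(h i).as_sum]
    rw [Finset.sum_mul]
    exact Finset.sum_congr rfl fun α _ => (initialForm_monomial_mul v α _ (p i)).symm
  obtain ⟨s, c, hcI, heq, hdist⟩ := sum_initialForm_decomposition v I
    (Finset.univ.sigma (fun i : Fin m => (h i).support))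
    (fun j => monomial j.2 ((h j.1).coeff j.2) * p j.1)
    (fun j _ => Ideal.mul_mem_left _ _ (hpI j.1))
  exact ⟨s, c, hcI, hf2.trans heq, hdist⟩
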